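/- Let e ≥ 1 and let μ : ℝ^e → ℝ^e be a continuous vector field. Let Φ : ℝ^e × ℝ → ℝ^e be continuously differentiable with ∂_t Φ(a,t) = μ(Φ(a,t)) for all (a,t). Let Ψ : ℝ^e × ℝ × ℝ → ℝ^e be continuously differentiable with Ψ(b,s,s) = b, ∂_t Ψ(b,s,t) = μ(Ψ(b,s,t)), and ∂_s Ψ(b,s,t) v = −∂_b Ψ(b,s,t)(μ(b)) v for all b,s,t (two-parameter flow of the same ODE). Let E : ℝ^e → ℝ and T : ℝ^e → ℝ^e be continuously differentiable, let a₀ ∈ ℝ^e, let U be an open neighborhood of a₀, and let τ : U → ℝ be differentiable at a₀ with E(Φ(a,τ(a))) = 0 for all a ∈ U. Fix t ∈ ℝ and set y₀ := Φ(a₀,τ(a₀)), b₀ := T(y₀), τ₀ := τ(a₀). Then the map g(a) := Ψ(T(Φ(a,τ(a))), τ(a), t) is differentiable at a₀ and Dg(a₀) = ∂_b Ψ(b₀,τ₀,t) ∘ [ ∇T(y₀) ∘ ∂_a Φ(a₀,τ₀) − (μ(b₀) − ∇T(y₀)μ(y₀)) · Dτ(a₀) ], i.e. for every h ∈ ℝ^e,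 Dg(a₀)h = ∂_b Ψ(b₀,τ₀,t)[ ∇T(y₀)(∂_a Φ(a₀,τ₀)h) − (μ(b₀) − ∇T(y₀)μ(y₀)) (Dτ(a₀)h) ]. (This is the post-event Jacobian recursion ∂y^n_t = (∂_{y^n_{τ_n}} y^n_t)[∇T ∂y^{n−1}_{τ_n} − (μ(y^n_{τ_n}) − ∇T μ(y^{n−1}_{τ_n}))∂τ_n] of Theorem 3.6 in the drift-only (ODE) case.) -/

import Mathlib

/-- Post-event Jacobian recursion for an Event ODE (drift-only case of Theorem 3.6):
with `Φ` the one-parameter flow of `dy = μ(y)dt`, `Ψ` the two-parameter flow of the same ODE,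
`τ` a differentiable event-time function with `E(Φ(a,τ(a))) = 0`, and `T` the transition map,
the post-event state `g(a) = Ψ(T(Φ(a,τ(a))), τ(a), t)` is differentiable at `a₀` with
`Dg(a₀)h = ∂_bΨ(b₀,τ₀,t)[∇T(y₀)(∂_aΦ(a₀,τ₀)h) − (μ(b₀) − ∇T(y₀)μ(y₀))(Dτ(a₀)h)]`. -/
theorem post_event_jacobian
    (e : ℕ) (he : 1 ≤ e)
    (μ : (Fin e → ℝ) → (Fin e → ℝ)) (hμ : Continuous μ)
    (Φ : (Fin e → ℝ) × ℝ → (Fin e → ℝ)) (hΦ : ContDiff ℝ 1 Φ)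
    (hflowΦ : ∀ (a : Fin e → ℝ) (t : ℝ),
      HasDerivAt (fun s : ℝ => Φ (a, s)) (μ (Φ (a, t))) t)
    (Ψ : (Fin e → ℝ) × ℝ × ℝ → (Fin e → ℝ)) (hΨ : ContDiff ℝ 1 Ψ)
    (hΨ_init : ∀ (b : Fin e → ℝ) (s : ℝ), Ψ (b, s, s) = b)
    (hΨ_t : ∀ (b : Fin e → ℝ) (s t : ℝ),
      HasDerivAt (fun r : ℝ => Ψ (b, s, r)) (μ (Ψ (b, s, t))) t)
    (hΨ_s : ∀ (b : Fin e → ℝ) (s t : ℝ),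
      deriv (fun r : ℝ => Ψ (b, r, t)) s =
        -(fderiv ℝ (fun b' => Ψ (b', s, t)) b (μ b)))
    (E : (Fin e → ℝ) → ℝ) (hE : ContDiff ℝ 1 E)
    (T : (Fin e → ℝ) → (Fin e → ℝ)) (hT : ContDiff ℝ 1 T)
    (a₀ : Fin e → ℝ) (U : Set (Fin e → ℝ)) (hU : IsOpen U) (ha₀ : a₀ ∈ U)
    (τ : (Fin e → ℝ) → ℝ) (hτ : DifferentiableAt ℝ τ a₀)
    (hevent : ∀ a ∈ U, E (Φ (a, τ a)) = 0)
    (t : ℝ) :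
    DifferentiableAt ℝ (fun a => Ψ (T (Φ (a, τ a)), τ a, t)) a₀ ∧
    (∀ h : Fin e → ℝ,
      fderiv ℝ (fun a => Ψ (T (Φ (a, τ a)), τ a, t)) a₀ h =
        fderiv ℝ (fun b => Ψ (b, τ a₀, t)) (T (Φ (a₀, τ a₀)))
          (fderiv ℝ T (Φ (a₀, τ a₀)) (fderiv ℝ (fun a => Φ (a, τ a₀)) a₀ h)
            - (fderiv ℝ τ a₀ h) •
              (μ (T (Φ (a₀, τ a₀)))
                - fderiv ℝ T (Φ (a₀, τ a₀)) (μ (Φ (a₀, τ a₀))))) ) := by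

  classical
  set τ₀ := τ a₀ with hτ₀
  set y₀ := Φ (a₀, τ₀) with hy₀
  set b₀ := T y₀ with hb₀
  have hΦd : Differentiable ℝ Φ := hΦ.differentiable one_ne_zero
  have hΨd : Differentiable ℝ Ψ := hΨ.differentiable one_ne_zero
  have hTd : Differentiable ℝ T := hT.differentiable one_ne_zero
  set LΦ := fderiv ℝ Φ (a₀, τ₀) with hLΦ
  set LΨ := fderiv ℝ Ψ (b₀, τ₀, t) with hLΨ
  set LT := fderiv ℝ T y₀ with hLT
  set Lτ := fderiv ℝ τ a₀ with hLτ
  have hΦ_at : HasFDerivAt Φ LΦ (a₀, τ₀) := (hΦd _).hasFDerivAt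
  have hΨ_at : HasFDerivAt Ψ LΨ (b₀, τ₀, t) := (hΨd _).hasFDerivAt
  have hT_at : HasFDerivAt T LT y₀ := (hTd _).hasFDerivAt
  have hτ_at : HasFDerivAt τ Lτ a₀ := hτ.hasFDerivAt
  -- derivative of a ↦ Φ (a, τ a)
  have hF1 : HasFDerivAt (fun a => ((a, τ a) : (Fin e → ℝ) × ℝ))
      ((ContinuousLinearMap.id ℝ (Fin e → ℝ)).prod Lτ) a₀ :=
    (hasFDerivAt_id a₀).prodMk hτ_at
  have hf1 : HasFDerivAt (fun a => Φ (a, τ a))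
      (LΦ.comp ((ContinuousLinearMap.id ℝ (Fin e → ℝ)).prod Lτ)) a₀ :=
    hΦ_at.comp a₀ hF1
  have hf2 : HasFDerivAt (fun a => T (Φ (a, τ a)))
      (LT.comp (LΦ.comp ((ContinuousLinearMap.id ℝ (Fin e → ℝ)).prod Lτ))) a₀ :=
    hT_at.comp a₀ hf1
  have hF3 : HasFDerivAt (fun a => ((T (Φ (a, τ a)), τ a, t) : (Fin e → ℝ) × ℝ × ℝ))
      ((LT.comp (LΦ.comp ((ContinuousLinearMap.id ℝ (Fin e → ℝ)).prod Lτ))).prod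
        (Lτ.prod 0)) a₀ :=
    hf2.prodMk (hτ_at.prodMk (hasFDerivAt_const t a₀))
  have hg : HasFDerivAt (fun a => Ψ (T (Φ (a, τ a)), τ a, t))
      (LΨ.comp ((LT.comp (LΦ.comp ((ContinuousLinearMap.id ℝ (Fin e → ℝ)).prod Lτ))).prod
        (Lτ.prod 0))) a₀ :=
    hΨ_at.comp a₀ hF3
  -- partial derivative of Φ in a
  have hpΦ : fderiv ℝ (fun a => Φ (a, τ₀)) a₀
      = LΦ.comp (ContinuousLinearMap.inl ℝ (Fin e → ℝ) ℝ) :=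
    (hΦ_at.comp a₀ (hasFDerivAt_prodMk_left a₀ τ₀)).fderiv
  -- time derivative of Φ gives LΦ (0, 1) = μ y₀
  have hμΦ : LΦ (0, 1) = μ y₀ := by
    have h1 : HasDerivAt (fun s => Φ (a₀, s))
        ((LΦ.comp (ContinuousLinearMap.inr ℝ (Fin e → ℝ) ℝ)) 1) τ₀ :=
      (hΦ_at.comp τ₀ (hasFDerivAt_prodMk_right a₀ τ₀)).hasDerivAt
    have h2 := h1.unique (hflowΦ a₀ τ₀)
    simpa using h2
  -- partial derivative of Ψ in b
  have hpΨ : fderiv ℝ (fun b => Ψ (b, τ₀, t)) b₀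
      = LΨ.comp (ContinuousLinearMap.inl ℝ (Fin e → ℝ) (ℝ × ℝ)) :=
    (hΨ_at.comp b₀ (hasFDerivAt_prodMk_left b₀ (τ₀, t))).fderiv
  -- s-derivative of Ψ gives LΨ (0, 1, 0) = -(LΨ (μ b₀, 0, 0))
  have hsΨ : LΨ (0, 1, 0) = -(LΨ (μ b₀, (0 : ℝ), (0 : ℝ))) := by
    have hmk : HasFDerivAt (fun r : ℝ => ((b₀, r, t) : (Fin e → ℝ) × ℝ × ℝ))
        ((0 : ℝ →L[ℝ] (Fin e → ℝ)).prod
          ((ContinuousLinearMap.id ℝ ℝ).prod (0 : ℝ →L[ℝ] ℝ))) τ₀ :=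
      (hasFDerivAt_const b₀ τ₀).prodMk ((hasFDerivAt_id τ₀).prodMk (hasFDerivAt_const t τ₀))
    have h1 : HasDerivAt (fun r : ℝ => Ψ (b₀, r, t))
        ((LΨ.comp ((0 : ℝ →L[ℝ] (Fin e → ℝ)).prod
          ((ContinuousLinearMap.id ℝ ℝ).prod (0 : ℝ →L[ℝ] ℝ)))) 1) τ₀ :=
      (hΨ_at.comp τ₀ hmk).hasDerivAt
    have h2 := h1.deriv
    rw [hΨ_s b₀ τ₀ t] at h2
    rw [hpΨ] at h2
    exact (by simpa using h2.symm : LΨ (0, 1, 0) = -(LΨ (μ b₀, (0 : ℝ × ℝ))))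
  refine ⟨hg.differentiableAt, fun h => ?_⟩
  rw [hg.fderiv, hpΦ, hpΨ]
  simp only [ContinuousLinearMap.coe_comp', Function.comp_apply,
    ContinuousLinearMap.prod_apply, ContinuousLinearMap.coe_id', id_eq,
    ContinuousLinearMap.zero_apply, ContinuousLinearMap.inl_apply]
  -- LHS: LΨ (LT (LΦ (h, Lτ h)), Lτ h, 0)
  have hA : ((h, Lτ h) : (Fin e → ℝ) × ℝ)
      = ((h, 0) : (Fin e → ℝ) × ℝ) + (Lτ h) • ((0, 1) : (Fin e → ℝ) × ℝ) := by
    simp [Prod.ext_iff]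
  have hB : LΦ (h, Lτ h) = LΦ (h, 0) + (Lτ h) • μ y₀ := by
    rw [hA, map_add, map_smul, hμΦ]
  rw [hB, map_add, map_smul]
  have hC : ((LT (LΦ (h, 0)) + Lτ h • LT (μ y₀), Lτ h, (0:ℝ)) : (Fin e → ℝ) × ℝ × ℝ)
      = ((LT (LΦ (h, 0)) + Lτ h • LT (μ y₀), (0:ℝ), (0:ℝ)) : (Fin e → ℝ) × ℝ × ℝ)
        + (Lτ h) • ((0, 1, 0) : (Fin e → ℝ) × ℝ × ℝ) := by
    simp [Prod.ext_iff]
  rw [hC, map_add, map_smul, hsΨ]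
  have hD : ((LT (LΦ (h, 0)) - Lτ h • (μ b₀ - LT (μ y₀)), (0 : ℝ × ℝ))
        : (Fin e → ℝ) × ℝ × ℝ)
      = ((LT (LΦ (h, 0)) + Lτ h • LT (μ y₀), (0:ℝ), (0:ℝ)) : (Fin e → ℝ) × ℝ × ℝ)
        - (Lτ h) • ((μ b₀, (0:ℝ), (0:ℝ)) : (Fin e → ℝ) × ℝ × ℝ) := by
    simp [Prod.ext_iff, smul_sub]
    module
  rw [hD, map_sub, map_smul]
  module
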